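/- arXiv:2308.07294 — 6 statements merged into one kernel-verified Lean document; each statement's English description precedes it below -/
import Mathlib

section
/- For any EL TBox T and any GCI C ⊑ D over concept names and roles, T ⊨ C ⊑ D if and only if T ∪ {D ⊑ B*} ⊨ C ⊑ B*, where B* is a fresh concept name not occurring in T, C, or D. -/
/-! Basic syntax and semantics of the description logic EL_⊥. -/

/-- EL_⊥ concepts over concept names `C` and role names `R`. -/
inductive ELConcept (C R : Type) : Type
  | top  : ELConcept C R
  | bot  : ELConcept C R
  | atom : C → ELConcept C R
  | conj : ELConcept C R → ELConcept C R → ELConcept C R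
  | ex   : R → ELConcept C R → ELConcept C R

/-- A general concept inclusion (GCI) `C ⊑ D`. -/
abbrev GCI (C R : Type) := ELConcept C R × ELConcept C R

/-- A TBox is a set of GCIs. -/
abbrev TBox (C R : Type) := Set (GCI C R)

/-- ABox assertions: concept assertions `C(a)` and role assertions `r(a,b)`. -/
inductive Assertion (C R Ind : Type) : Type
  | concept : ELConcept C R → Ind → Assertion C R Ind
  | role    : R → Ind → Ind → Assertion C R Ind

/-- An ABox is a set of assertions. -/
abbrev ABox (C R Ind : Type) := Set (Assertion C R Ind)

/-- An interpretation with domain `δ`, interpreting concept names, role names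
and individual names. -/
structure Interp (C R Ind δ : Type) where
  atomI : C → Set δ
  roleI : R → Set (δ × δ)
  indI  : Ind → δ

/-- Semantics of concepts. -/
def Interp.sem {C R Ind δ : Type} (I : Interp C R Ind δ) : ELConcept C R → Set δ
  | .top => Set.univ
  | .bot => ∅
  | .atom A => I.atomI A
  | .conj c d => I.sem c ∩ I.sem d
  | .ex r c => {x | ∃ y, (x, y) ∈ I.roleI r ∧ y ∈ I.sem c}

/-- `I` satisfies a GCI `C ⊑ D` iff `C^I ⊆ D^I`. -/
def Interp.satGCI {C R Ind δ : Type} (I : Interp C R Ind δ) (g : GCI C R) : Prop :=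
  I.sem g.1 ⊆ I.sem g.2

/-- `I` is a model of a TBox. -/
def Interp.modelT {C R Ind δ : Type} (I : Interp C R Ind δ) (T : TBox C R) : Prop :=
  ∀ g ∈ T, I.satGCI g

/-- `I` satisfies an assertion. -/
def Interp.satA {C R Ind δ : Type} (I : Interp C R Ind δ) : Assertion C R Ind → Prop
  | .concept c a => I.indI a ∈ I.sem c
  | .role r a b => (I.indI a, I.indI b) ∈ I.roleI r

/-- `I` is a model of an ABox. -/
def Interp.modelA {C R Ind δ : Type} (I : Interp C R Ind δ) (A : ABox C R Ind) : Prop :=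
  ∀ ax ∈ A, I.satA ax

/-- `I` is a model of the ontology `O = A ∪ T`. -/
def Interp.modelO {C R Ind δ : Type} (I : Interp C R Ind δ) (A : ABox C R Ind)
    (T : TBox C R) : Prop :=
  I.modelA A ∧ I.modelT T

/-- TBox entailment of a GCI: every model of `T` satisfies the GCI. -/
def entailsT {C R : Type} (T : TBox C R) (g : GCI C R) : Prop :=
  ∀ (Ind δ : Type) (I : Interp C R Ind δ), I.modelT T → I.satGCI g

/-- The ontology `A ∪ T` is consistent iff it has a model. -/
def consistentO {C R Ind : Type} (A : ABox C R Ind) (T : TBox C R) : Prop :=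
  ∃ (δ : Type) (I : Interp C R Ind δ), I.modelO A T

/-- Entailment of an assertion from an ontology `A ∪ T`. -/
def entailsO {C R Ind : Type} (A : ABox C R Ind) (T : TBox C R)
    (ax : Assertion C R Ind) : Prop :=
  ∀ (δ : Type) (I : Interp C R Ind δ), I.modelO A T → I.satA ax

/-- Occurrence of a concept name in a concept. -/
def occursName {C R : Type} (B : C) : ELConcept C R → Prop
  | .atom A => A = B
  | .conj c d => occursName B c ∨ occursName B d
  | .ex _ c => occursName B c
  | _ => False

/-- Occurrence of a concept name in a TBox. -/
def occursNameT {C R : Type} (B : C) (T : TBox C R) : Prop :=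
  ∃ g ∈ T, occursName B g.1 ∨ occursName B g.2

/-- A concept is ⊥-free (i.e. an EL concept). -/
def botFree {C R : Type} : ELConcept C R → Prop
  | .bot => False
  | .conj c d => botFree c ∧ botFree d
  | .ex _ c => botFree c
  | _ => True

/-- The top-level conjuncts `At(D)` of a concept `D`: the conjuncts of `D`
if `D` is a conjunction, and `{D}` otherwise. -/
def At {C R : Type} : ELConcept C R → Set (ELConcept C R)
  | .conj c d => At c ∪ At d
  | c => {c}

/-- A concept that is a concept name or `⊤`. -/
def atomicOrTop {C R : Type} (c : ELConcept C R) : Prop :=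
  c = ELConcept.top ∨ ∃ A, c = ELConcept.atom A

/-- A basic concept: a concept name, `⊤`, or `⊥`. -/
def isBasic {C R : Type} (c : ELConcept C R) : Prop :=
  c = ELConcept.top ∨ c = ELConcept.bot ∨ ∃ A, c = ELConcept.atom A

/-- Axioms of a normalized EL_⊥ TBox: `A ⊑ B`, `A₁ ⊓ A₂ ⊑ B`, `∃r.A ⊑ B`,
or `A ⊑ ∃r.B`, with `A, A₁, A₂, B` concept names, `⊤`, or `⊥`. -/
def normalizedAxiom {C R : Type} (g : GCI C R) : Prop :=
  (isBasic g.1 ∧ isBasic g.2) ∨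
  (∃ A1 A2, isBasic A1 ∧ isBasic A2 ∧ g.1 = ELConcept.conj A1 A2 ∧ isBasic g.2) ∨
  (∃ r A, isBasic A ∧ g.1 = ELConcept.ex r A ∧ isBasic g.2) ∨
  (∃ r B, isBasic B ∧ g.2 = ELConcept.ex r B ∧ isBasic g.1)

/-- A normalized TBox. -/
def normalized {C R : Type} (T : TBox C R) : Prop :=
  ∀ g ∈ T, normalizedAxiom g

/-- The left-hand side `L` of a TBox axiom is witnessed at `a` in `A`. -/
def witnessed {C R Ind : Type} (A : ABox C R Ind) (L : ELConcept C R) (a : Ind) : Prop :=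
  Assertion.concept L a ∈ A ∨
  ∃ c d, L = ELConcept.conj c d ∧ Assertion.concept c a ∈ A ∧ Assertion.concept d a ∈ A

/-- An assertion mentions the individual `d`. -/
def Assertion.mentions {C R Ind : Type} (d : Ind) : Assertion C R Ind → Prop
  | .concept _ a => a = d
  | .role _ a b => a = d ∨ b = d

/-- The individual `d` occurs in the ABox `A`. -/
def mentionsA {C R Ind : Type} (d : Ind) (A : ABox C R Ind) : Prop :=
  ∃ ax ∈ A, ax.mentions d

/-- The expansion rules other than the ∃₂-rule: the ⊓-rule, the ∃₁-rule and
the ⊑-rule. -/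
inductive StepCore {C R Ind : Type} (T : TBox C R) : ABox C R Ind → ABox C R Ind → Prop
  | conjRule {A : ABox C R Ind} {D c : ELConcept C R} {a : Ind} :
      Assertion.concept D a ∈ A → c ∈ At D → Assertion.concept c a ∉ A →
      StepCore T A (insert (Assertion.concept c a) A)
  | ex1 {A : ABox C R Ind} {r : R} {a b : Ind} {B : ELConcept C R} :
      Assertion.role r a b ∈ A → Assertion.concept B b ∈ A → atomicOrTop B →
      Assertion.concept (ELConcept.ex r B) a ∉ A →
      StepCore T A (insert (Assertion.concept (ELConcept.ex r B) a) A)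
  | sub {A : ABox C R Ind} {g : GCI C R} {a : Ind} :
      g ∈ T → witnessed A g.1 a → Assertion.concept g.2 a ∉ A →
      StepCore T A (insert (Assertion.concept g.2 a) A)

/-- The ∃₂-rule, parameterized by a guard `good` describing when an existing
individual may be reused as a successor. A fresh individual is introduced
only if no existing individual can be reused. -/
inductive StepEx {C R Ind : Type} (good : ABox C R Ind → Prop) :
    ABox C R Ind → ABox C R Ind → Prop
  | reuse {A : ABox C R Ind} {r : R} {a c : Ind} {E : ELConcept C R} :
      Assertion.concept (ELConcept.ex r E) a ∈ A →
      (¬ ∃ b, Assertion.role r a b ∈ A ∧ Assertion.concept E b ∈ A) →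
      good (insert (Assertion.role r a c) (insert (Assertion.concept E c) A)) →
      StepEx good A (insert (Assertion.role r a c) (insert (Assertion.concept E c) A))
  | fresh {A : ABox C R Ind} {r : R} {a d : Ind} {E : ELConcept C R} :
      Assertion.concept (ELConcept.ex r E) a ∈ A →
      (¬ ∃ b, Assertion.role r a b ∈ A ∧ Assertion.concept E b ∈ A) →
      (¬ ∃ c, good (insert (Assertion.role r a c) (insert (Assertion.concept E c) A))) →
      ¬ mentionsA d A →
      StepEx good A (insert (Assertion.role r a d) (insert (Assertion.concept E d)
        (insert (Assertion.concept ELConcept.top d) A)))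

/-- One application of any expansion rule. -/
def Step {C R Ind : Type} (T : TBox C R) (good : ABox C R Ind → Prop)
    (A A' : ABox C R Ind) : Prop :=
  StepCore T A A' ∨ StepEx good A A'

/-- One application of an expansion rule under the strategy that the ∃₂-rule
is applied only when no other rule is applicable. -/
def StepPr {C R Ind : Type} (T : TBox C R) (good : ABox C R Ind → Prop)
    (A A' : ABox C R Ind) : Prop :=
  StepCore T A A' ∨ ((¬ ∃ B, StepCore T A B) ∧ StepEx good A A')

/-- An ABox is complete if no expansion rule is applicable. -/
def completeA {C R Ind : Type} (T : TBox C R) (good : ABox C R Ind → Prop)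
    (A' : ABox C R Ind) : Prop :=
  ¬ ∃ A'', Step T good A' A''

/-- An ABox is clash-free if it contains no assertion `⊥(a)`. -/
def clashFree {C R Ind : Type} (A' : ABox C R Ind) : Prop :=
  ∀ a, Assertion.concept ELConcept.bot a ∉ A'

/-- The interpretation induced from an ABox: `a^I = a`,
`A^I = {a | A(a) ∈ A'}`, `r^I = {(a,b) | r(a,b) ∈ A'}`. -/
def induced {C R Ind : Type} (A' : ABox C R Ind) : Interp C R Ind Ind where
  atomI := fun B => {a | Assertion.concept (ELConcept.atom B) a ∈ A'}
  roleI := fun r => {p | Assertion.role r p.1 p.2 ∈ A'}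
  indI := id


open scoped Classical in
/-- Pointwise update of an atom interpretation. -/
noncomputable def updAtom {C δ : Type} (f : C → Set δ) (B : C) (S : Set δ) : C → Set δ :=
  fun A => if A = B then S else f A

open scoped Classical in
lemma sem_update {C R Ind δ : Type} (I : Interp C R Ind δ) (B : C) (S : Set δ)
    (E : ELConcept C R) (h : ¬ occursName B E) :
    Interp.sem ⟨updAtom I.atomI B S, I.roleI, I.indI⟩ E = I.sem E := by
  induction E with
  | top => rfl
  | bot => rfl
  | atom A =>
      have : A ≠ B := h
      simp [Interp.sem, updAtom, this]
  | conj c d ihc ihd =>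
      simp only [occursName] at h
      push_neg at h
      simp only [Interp.sem, ihc h.1, ihd h.2]
  | ex r c ih =>
      simp only [occursName] at h
      simp only [Interp.sem, ih h]

/-- For any EL TBox `T` and GCI `C ⊑ D`, `T ⊨ C ⊑ D` iff
`T ∪ {D ⊑ B*} ⊨ C ⊑ B*`, where `B*` is a fresh concept name. -/
theorem stmt0 {C R : Type} (T : TBox C R) (Cc D : ELConcept C R) (Bstar : C)
    (hbfT : ∀ g ∈ T, botFree g.1 ∧ botFree g.2) (hbfC : botFree Cc) (hbfD : botFree D)
    (hfreshT : ¬ occursNameT Bstar T) (hfreshC : ¬ occursName Bstar Cc)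
    (hfreshD : ¬ occursName Bstar D) :
    entailsT T (Cc, D) ↔
      entailsT (insert (D, ELConcept.atom Bstar) T) (Cc, ELConcept.atom Bstar) := by
  constructor
  · intro h Ind δ I hM
    have hT : I.modelT T := fun g hg => hM g (Set.mem_insert_iff.mpr (Or.inr hg))
    have hDB := hM (D, ELConcept.atom Bstar) (Set.mem_insert _ _)
    exact fun x hx => hDB (h Ind δ I hT hx)
  · intro h Ind δ I hT
    set I' : Interp C R Ind δ := ⟨updAtom I.atomI Bstar (I.sem D), I.roleI, I.indI⟩
    have hT' : I'.modelT (insert (D, ELConcept.atom Bstar) T) := by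
      intro g hg
      rcases Set.mem_insert_iff.mp hg with rfl | hg
      · intro x hx
        rw [sem_update I Bstar (I.sem D) D hfreshD] at hx
        simpa [I', Interp.sem, Interp.satGCI, updAtom] using hx
      · have hf : ¬ (occursName Bstar g.1 ∨ occursName Bstar g.2) :=
          fun hc => hfreshT ⟨g, hg, hc⟩
        push_neg at hf
        have := hT g hg
        unfold Interp.satGCI at this ⊢
        rw [sem_update I Bstar (I.sem D) g.1 hf.1, sem_update I Bstar (I.sem D) g.2 hf.2]
        exact this
    have := h Ind δ I' hT'
    unfold Interp.satGCI at this ⊢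
    rw [sem_update I Bstar (I.sem D) Cc hfreshC] at this
    intro x hx
    have hx' := this hx
    simpa [I', Interp.sem, updAtom] using hx'
end

section
/- Application of the ⊓-rule preserves consistency: if an EL_⊥ ontology O = A ∪ T is consistent and D(a) ∈ A with C a top-level conjunct of D, then A ∪ {C(a)} ∪ T is consistent. In fact, every model of O is a model of A ∪ {C(a)} ∪ T. -/
lemma At_sem {C R Ind δ : Type} (I : Interp C R Ind δ) :
    ∀ (D c : ELConcept C R), c ∈ At D → I.sem D ⊆ I.sem c
  | .conj d e, c, hc => by
    rcases hc with h | h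
    · exact fun x hx => At_sem I d c h hx.1
    · exact fun x hx => At_sem I e c h hx.2
  | .top, c, hc => by cases hc; exact le_refl _
  | .bot, c, hc => by cases hc; exact le_refl _
  | .atom _, c, hc => by cases hc; exact le_refl _
  | .ex _ _, c, hc => by cases hc; exact le_refl _

/-- The ⊓-rule preserves consistency; in fact every model of
`O = A ∪ T` is a model of `A ∪ {C(a)} ∪ T`. -/
theorem stmt2 {C R Ind : Type} (A : ABox C R Ind) (T : TBox C R)
    (D c : ELConcept C R) (a : Ind)
    (hD : Assertion.concept D a ∈ A) (hc : c ∈ At D) :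
    (∀ (δ : Type) (I : Interp C R Ind δ), I.modelO A T →
        I.modelO (insert (Assertion.concept c a) A) T) ∧
      (consistentO A T → consistentO (insert (Assertion.concept c a) A) T) := by
  constructor
  · rintro δ I ⟨hA, hT⟩
    refine ⟨?_, hT⟩
    intro ax hax
    rcases hax with rfl | hax
    · exact At_sem I D c hc (hA _ hD)
    · exact hA _ hax
  · rintro ⟨δ, I, hI⟩
    exact ⟨δ, I, by
      rcases hI with ⟨hA, hT⟩
      refine ⟨?_, hT⟩
      intro ax hax
      rcases hax with rfl | hax
      · exact At_sem I D c hc (hA _ hD)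
      · exact hA _ hax⟩
end

section
/- The interpretation I induced from a complete ABox A' satisfies every assertion in A': for every role assertion r(a,b) ∈ A' we have (a^I, b^I) ∈ r^I, and for every concept assertion C(a) ∈ A' we have a^I ∈ C^I. -/
/-- The interpretation induced from a complete ABox `A'`
satisfies every assertion of `A'` (concepts in assertions being EL, i.e.
⊥-free). -/
theorem stmt9 {C R Ind : Type} [Infinite Ind] (T : TBox C R)
    (good : ABox C R Ind → Prop) (A' : ABox C R Ind)
    (hfin : A'.Finite)
    (hbf : ∀ (c : ELConcept C R) (a : Ind), Assertion.concept c a ∈ A' → botFree c)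
    (hcomp : completeA T good A') :
    ∀ ax ∈ A', (induced A').satA ax := by
  -- saturation for top-level conjuncts
  have atMem : ∀ (D : ELConcept C R) (a : Ind), Assertion.concept D a ∈ A' →
      ∀ e ∈ At D, Assertion.concept e a ∈ A' := by
    intro D a hD e he
    by_contra hne
    exact hcomp ⟨_, Or.inl (StepCore.conjRule hD he hne)⟩
  -- existential saturation
  have exSat : ∀ (r : R) (E : ELConcept C R) (a : Ind),
      Assertion.concept (ELConcept.ex r E) a ∈ A' →
      ∃ b, Assertion.role r a b ∈ A' ∧ Assertion.concept E b ∈ A' := by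
    intro r E a hEx
    by_contra hnb
    by_cases hg : ∃ c, good (insert (Assertion.role r a c)
        (insert (Assertion.concept E c) A'))
    · obtain ⟨c, hc⟩ := hg
      exact hcomp ⟨_, Or.inr (StepEx.reuse hEx hnb hc)⟩
    · -- find a fresh individual
      have hS : {d : Ind | mentionsA d A'}.Finite := by
        have : {d : Ind | mentionsA d A'} =
            ⋃ ax ∈ A', {d | Assertion.mentions d ax} := by
          ext d
          simp only [mentionsA, Set.mem_setOf_eq, Set.mem_iUnion]
          tauto
        rw [this]
        apply Set.Finite.biUnion hfin
        intro ax _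
        rcases ax with ⟨c, a'⟩ | ⟨r', a', b'⟩
        · exact (Set.finite_singleton a').subset (by
            intro x hx; simpa [Assertion.mentions] using hx)
        · exact ((Set.finite_singleton b').insert a').subset (by
            intro x hx
            simp only [Assertion.mentions, Set.mem_setOf_eq] at hx
            rcases hx with h|h <;> simp [h.symm])
      obtain ⟨d, hd⟩ := hS.infinite_compl.nonempty
      exact hcomp ⟨_, Or.inr (StepEx.fresh hEx hnb hg hd)⟩
  -- main semantic lemma via top-level conjuncts
  have Q : ∀ (c : ELConcept C R) (a : Ind),
      (∀ e ∈ At c, Assertion.concept e a ∈ A') → a ∈ (induced A').sem c := by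
    intro c
    induction c with
    | top => intro a _; trivial
    | bot =>
      intro a h
      have := hbf _ a (h ELConcept.bot (by simp [At]))
      simp [botFree] at this
    | atom A =>
      intro a h
      exact h (ELConcept.atom A) (by simp [At])
    | conj c d ihc ihd =>
      intro a h
      exact ⟨ihc a (fun e he => h e (Or.inl he)), ihd a (fun e he => h e (Or.inr he))⟩
    | ex r E ih =>
      intro a h
      have hEx : Assertion.concept (ELConcept.ex r E) a ∈ A' :=
        h _ (by simp [At])
      obtain ⟨b, hrb, hEb⟩ := exSat r E a hEx
      exact ⟨b, hrb, ih b (atMem E b hEb)⟩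
  intro ax hax
  rcases ax with ⟨c, a⟩ | ⟨r, a, b⟩
  · exact Q c a (atMem c a hax)
  · exact hax
end

section
/- Soundness of the counterexample algorithm: if T ⊭ C ⊑ D for a normalized EL_⊥ TBox T (with D ⊑ B* ∈ T, B* fresh), then in the interpretation I generated by the algorithm from the initial ABox {C(a*)}, the root element satisfies a*^I ∉ (B*)^I. -/
/-- The guard used by the counterexample algorithm for reusing individuals:
the extended ontology must be consistent and must not entail `B*(a*)`. -/
def ceGuard {C R Ind : Type} (T : TBox C R) (Bstar : C) (astar : Ind)
    (B : ABox C R Ind) : Prop :=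
  consistentO B T ∧ ¬ entailsO B T (Assertion.concept (ELConcept.atom Bstar) astar)

section Aux

variable {C R : Type}

/-- Concept semantics depends only on the interpretation of concept and role names. -/
lemma sem_ext {Ind Ind' δ : Type} (I : Interp C R Ind δ) (I' : Interp C R Ind' δ)
    (ha : ∀ A, I'.atomI A = I.atomI A) (hr : ∀ r, I'.roleI r = I.roleI r) :
    ∀ c : ELConcept C R, I'.sem c = I.sem c := by
  intro c
  induction c with
  | top => rfl
  | bot => rfl
  | atom A => exact ha A
  | conj c d ihc ihd => show I'.sem c ∩ I'.sem d = _; rw [ihc, ihd]; rfl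
  | ex r c ih =>
      show {x | ∃ y, (x, y) ∈ I'.roleI r ∧ y ∈ I'.sem c} = _
      rw [ih, hr r]; rfl

/-- If a concept name doesn't occur in a concept, its semantics ignores it. -/
lemma sem_congr {Ind Ind' δ : Type} (I : Interp C R Ind δ) (I' : Interp C R Ind' δ)
    (Bstar : C) (ha : ∀ A, A ≠ Bstar → I'.atomI A = I.atomI A)
    (hr : ∀ r, I'.roleI r = I.roleI r) :
    ∀ c : ELConcept C R, ¬ occursName Bstar c → I'.sem c = I.sem c := by
  intro c
  induction c with
  | top => intro _; rfl
  | bot => intro _; rfl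
  | atom A =>
      intro h
      exact ha A (fun hA => h (show A = Bstar from hA))
  | conj c d ihc ihd =>
      intro h
      have hc : ¬ occursName Bstar c := fun hc => h (Or.inl hc)
      have hd : ¬ occursName Bstar d := fun hd => h (Or.inr hd)
      show I'.sem c ∩ I'.sem d = _
      rw [ihc hc, ihd hd]; rfl
  | ex r c ih =>
      intro h
      have hc : ¬ occursName Bstar c := h
      show {x | ∃ y, (x, y) ∈ I'.roleI r ∧ y ∈ I'.sem c} = _
      rw [ih hc, hr r]; rfl

/-- Every top-level conjunct of `D` contains `D` semantically. -/
lemma sem_At {Ind δ : Type} (I : Interp C R Ind δ) :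
    ∀ (D c : ELConcept C R), c ∈ At D → I.sem D ⊆ I.sem c := by
  intro D
  induction D with
  | conj c d ihc ihd =>
      intro e he
      rcases (show e ∈ At c ∪ At d from he) with h | h
      · exact fun x hx => ihc e h hx.1
      · exact fun x hx => ihd e h hx.2
  | top => intro e he; rw [show e = ELConcept.top from he]
  | bot => intro e he; rw [show e = ELConcept.bot from he]
  | atom A => intro e he; rw [show e = ELConcept.atom A from he]
  | ex r c ih => intro e he; rw [show e = ELConcept.ex r c from he]

/-- Membership in the ABox implies entailment. -/
lemma entails_of_mem {Ind : Type} (A : ABox C R Ind) (T : TBox C R)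
    {ax : Assertion C R Ind} (h : ax ∈ A) : entailsO A T ax :=
  fun _ I hI => hI.1 ax h

/-- `mentionsA` is monotone under insertion. -/
lemma mentionsA_insert {Ind : Type} {A : ABox C R Ind} {d : Ind}
    (h : mentionsA d A) (ax : Assertion C R Ind) : mentionsA d (insert ax A) := by
  obtain ⟨b, hb, hbd⟩ := h
  exact ⟨b, Set.mem_insert_of_mem _ hb, hbd⟩

end Aux

/-- Soundness of the counterexample algorithm: if `T ⊭ C ⊑ D`
(where the normalized `T` contains `D ⊑ B*` with `B*` fresh), then in the
interpretation induced from the complete ABox generated from `{C(a*)}`, the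
root element satisfies `a*^I ∉ (B*)^I`. -/
theorem stmt13 {C R Ind : Type} [Infinite Ind] (T : TBox C R)
    (Cc D : ELConcept C R) (Bstar : C) (astar : Ind) (A' : ABox C R Ind)
    (hnorm : ∀ g ∈ T, normalizedAxiom g ∨ g = (D, ELConcept.atom Bstar))
    (hmem : (D, ELConcept.atom Bstar) ∈ T)
    (hfreshC : ¬ occursName Bstar Cc) (hfreshD : ¬ occursName Bstar D)
    (hfreshT : ∀ g ∈ T, g = (D, ELConcept.atom Bstar) ∨
      (¬ occursName Bstar g.1 ∧ ¬ occursName Bstar g.2))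
    (hfin : A'.Finite)
    (hreach : Relation.ReflTransGen (Step T (ceGuard T Bstar astar))
      {Assertion.concept Cc astar} A')
    (hcomp : completeA T (ceGuard T Bstar astar) A')
    (hne : ¬ entailsT T (Cc, D)) :
    (induced A').indI astar ∉ (induced A').sem (ELConcept.atom Bstar) := by
  classical
  set ax0 : Assertion C R Ind := Assertion.concept (ELConcept.atom Bstar) astar with hax0
  have key : (¬ entailsO A' T ax0) ∧ mentionsA astar A' := by
    clear hcomp hfin
    induction hreach with
    | refl =>
        constructor
        · -- base case: build a countermodel from a countermodel of C ⊑ D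
          intro hent
          rw [entailsT] at hne
          push_neg at hne
          obtain ⟨Ind', δ, I, hIT, hIne⟩ := hne
          rw [Interp.satGCI] at hIne
          obtain ⟨x, hxC, hxD⟩ := Set.not_subset.mp hIne
          -- adjust the interpretation of Bstar to be D^I
          set J : Interp C R Ind δ :=
            ⟨fun A => if A = Bstar then I.sem D else I.atomI A, I.roleI, fun _ => x⟩ with hJ
          have hja : ∀ A, A ≠ Bstar → J.atomI A = I.atomI A := by
            intro A hA; simp [hJ, hA]
          have hjr : ∀ r, J.roleI r = I.roleI r := fun _ => rfl
          have hsemD : J.sem D = I.sem D := sem_congr I J Bstar hja hjr D hfreshD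
          have hsemC : J.sem Cc = I.sem Cc := sem_congr I J Bstar hja hjr Cc hfreshC
          have hJT : J.modelT T := by
            intro g hg
            rcases hfreshT g hg with hgeq | ⟨h1, h2⟩
            · subst hgeq
              intro y hy
              have hy' : y ∈ J.sem D := hy
              rw [hsemD] at hy'
              show y ∈ J.atomI Bstar
              rw [hJ]
              simpa using hy'
            · show J.sem g.1 ⊆ J.sem g.2
              rw [sem_congr I J Bstar hja hjr g.1 h1, sem_congr I J Bstar hja hjr g.2 h2]
              exact hIT g hg
          have hJA : J.modelA {Assertion.concept Cc astar} := by
            intro ax hax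
            rw [Set.mem_singleton_iff] at hax
            subst hax
            show J.indI astar ∈ J.sem Cc
            rw [hsemC]; exact hxC
          have := hent δ J ⟨hJA, hJT⟩
          rw [hax0] at this
          have : x ∈ J.sem (ELConcept.atom Bstar) := this
          have : x ∈ I.sem D := by
            simpa [hJ, Interp.sem] using this
          exact hxD this
        · exact ⟨Assertion.concept Cc astar, rfl, rfl⟩
    | @tail b c hsteps hstep ih =>
        obtain ⟨ihent, ihmen⟩ := ih
        -- extract a countermodel of the old ABox
        rw [entailsO] at ihent
        push_neg at ihent
        obtain ⟨δ, I, hIO, hIax⟩ := ihent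
        rcases hstep with hcore | hex
        · -- core rules add only entailed assertions
          have : ∃ x, c = insert x b ∧ I.satA x := by
            cases hcore with
            | @conjRule D' c' a hDa hc' _ =>
                refine ⟨_, rfl, ?_⟩
                exact sem_At I D' c' hc' (hIO.1 _ hDa)
            | @ex1 r a b' B hr hB _ _ =>
                exact ⟨_, rfl, ⟨I.indI b', hIO.1 _ hr, hIO.1 _ hB⟩⟩
            | @sub g a hg hw _ =>
                refine ⟨_, rfl, ?_⟩
                have h1 : I.indI a ∈ I.sem g.1 := by
                  rcases hw with h | ⟨c', d', heq, hc', hd'⟩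
                  · exact hIO.1 _ h
                  · rw [heq]
                    exact ⟨hIO.1 _ hc', hIO.1 _ hd'⟩
                exact hIO.2 g hg h1
          obtain ⟨x, rfl, hx⟩ := this
          constructor
          · intro hent
            exact hIax (hent δ I ⟨fun a ha => by
              rcases ha with rfl | ha
              · exact hx
              · exact hIO.1 a ha, hIO.2⟩)
          · exact mentionsA_insert ihmen _
        · -- existential rule
          cases hex with
          | @reuse r a c' E hEx hno hgood =>
              exact ⟨hgood.2, mentionsA_insert (mentionsA_insert ihmen _) _⟩
          | @fresh r a d E hEx hno hng hd =>
              -- fresh successor: extend the countermodel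
              obtain ⟨y, hry, hyE⟩ : ∃ y, (I.indI a, y) ∈ I.roleI r ∧ y ∈ I.sem E :=
                hIO.1 _ hEx
              set J : Interp C R Ind δ :=
                ⟨I.atomI, I.roleI, fun b' => if b' = d then y else I.indI b'⟩ with hJ
              have hsem : ∀ c'' : ELConcept C R, J.sem c'' = I.sem c'' :=
                sem_ext I J (fun _ => rfl) (fun _ => rfl)
              have had : a ≠ d := by
                intro h; subst h
                exact hd ⟨_, hEx, rfl⟩
              have hstard : astar ≠ d := by
                intro h; subst h
                obtain ⟨ax, hax, hm⟩ := ihmen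
                exact hd ⟨ax, hax, hm⟩
              have hsatold : ∀ ax ∈ b, J.satA ax := by
                intro ax hax
                have hnd : ¬ ax.mentions d := fun h => hd ⟨ax, hax, h⟩
                cases ax with
                | concept c'' b' =>
                    have hb' : b' ≠ d := fun h => hnd h
                    show J.indI b' ∈ J.sem c''
                    rw [hsem]
                    simp only [hJ, if_neg hb']
                    exact hIO.1 _ hax
                | role r' b' c'' =>
                    have h1 : b' ≠ d := fun h => hnd (Or.inl h)
                    have h2 : c'' ≠ d := fun h => hnd (Or.inr h)
                    show (J.indI b', J.indI c'') ∈ J.roleI r'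
                    simp only [hJ, if_neg h1, if_neg h2]
                    exact hIO.1 _ hax
              have hJA : J.modelA (insert (Assertion.role r a d)
                  (insert (Assertion.concept E d)
                    (insert (Assertion.concept ELConcept.top d) b))) := by
                intro ax hax
                rcases hax with rfl | hax
                · show (J.indI a, J.indI d) ∈ J.roleI r
                  simp only [hJ, if_neg had, if_pos rfl]
                  exact hry
                rcases hax with rfl | hax
                · show J.indI d ∈ J.sem E
                  rw [hsem]
                  simp only [hJ, if_pos rfl]
                  exact hyE
                rcases hax with rfl | hax
                · exact Set.mem_univ _
                · exact hsatold ax hax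
              have hJT : J.modelT T := by
                intro g hg
                show J.sem g.1 ⊆ J.sem g.2
                rw [hsem, hsem]
                exact hIO.2 g hg
              constructor
              · intro hent
                have := hent δ J ⟨hJA, hJT⟩
                rw [hax0] at this
                have h1 : J.indI astar ∈ J.sem (ELConcept.atom Bstar) := this
                rw [hsem] at h1
                simp only [hJ, if_neg hstard] at h1
                exact hIax h1
              · exact mentionsA_insert (mentionsA_insert (mentionsA_insert ihmen _) _) _
  intro hmemB
  have hin : Assertion.concept (ELConcept.atom Bstar) astar ∈ A' := hmemB
  exact key.1 (entails_of_mem A' T hin)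
end

section
/- Completeness of the counterexample algorithm: if in the interpretation I generated by Generate-model(T) the root element satisfies a*^I ∈ (B*)^I, then T ⊨ C ⊑ D. Equivalently (contrapositive), if T ⊭ C ⊑ D then the algorithm's output is a genuine counterexample with a*^I ∈ C^I and a*^I ∉ (B*)^I. -/
section MyAux

variable {C R Ind : Type}

/-- Size of a concept, for strong induction. -/
def csize : ELConcept C R → Nat
  | .conj c d => csize c + csize d + 1
  | .ex _ c => csize c + 1
  | _ => 1

lemma csize_pos (c : ELConcept C R) : 1 ≤ csize c := by
  cases c <;> simp [csize]

lemma mem_At_csize {e c : ELConcept C R} (h : e ∈ At c) : csize e ≤ csize c := by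
  induction c with
  | conj c d ihc ihd =>
      rcases h with h | h
      · exact le_trans (ihc h) (by simp [csize]; omega)
      · exact le_trans (ihd h) (by simp [csize]; omega)
  | top => simp only [At, Set.mem_singleton_iff] at h; subst h; rfl
  | bot => simp only [At, Set.mem_singleton_iff] at h; subst h; rfl
  | atom A => simp only [At, Set.mem_singleton_iff] at h; subst h; rfl
  | ex r c ih => simp only [At, Set.mem_singleton_iff] at h; subst h; rfl

lemma sem_mem_At {δ : Type} (I : Interp C R Ind δ) {c e : ELConcept C R} (h : e ∈ At c)
    {x : δ} (hx : x ∈ I.sem c) : x ∈ I.sem e := by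
  induction c with
  | conj c d ihc ihd =>
      rcases h with h | h
      · exact ihc h hx.1
      · exact ihd h hx.2
  | top => simp only [At, Set.mem_singleton_iff] at h; subst h; exact hx
  | bot => simp only [At, Set.mem_singleton_iff] at h; subst h; exact hx
  | atom A => simp only [At, Set.mem_singleton_iff] at h; subst h; exact hx
  | ex r c ih => simp only [At, Set.mem_singleton_iff] at h; subst h; exact hx

lemma sem_of_At {δ : Type} (I : Interp C R Ind δ) {c : ELConcept C R} {x : δ}
    (h : ∀ e ∈ At c, x ∈ I.sem e) : x ∈ I.sem c := by
  induction c with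
  | conj c d ihc ihd =>
      exact ⟨ihc (fun e he => h e (Or.inl he)), ihd (fun e he => h e (Or.inr he))⟩
  | top => exact h _ rfl
  | bot => exact h _ rfl
  | atom A => exact h _ rfl
  | ex r c ih => exact h _ rfl

/-- Semantics does not depend on the interpretation of individual names. -/
lemma sem_mk {Ind' δ : Type} (I : Interp C R Ind δ) (f : Ind' → δ) (c : ELConcept C R) :
    (Interp.mk I.atomI I.roleI f : Interp C R Ind' δ).sem c = I.sem c := by
  induction c <;> simp [Interp.sem, *]

/-- Two interpretations agreeing on roles and on all concept names except `Bstar`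
give the same semantics to `Bstar`-free concepts. -/
lemma sem_fresh {Ind' δ : Type} (I : Interp C R Ind δ) (J : Interp C R Ind' δ) (Bstar : C)
    (hA : ∀ B, B ≠ Bstar → J.atomI B = I.atomI B) (hR : J.roleI = I.roleI) :
    ∀ c : ELConcept C R, ¬ occursName Bstar c → J.sem c = I.sem c := by
  intro c hc
  induction c with
  | top => rfl
  | bot => rfl
  | atom A => exact hA A hc
  | conj c d ihc ihd =>
      have : ¬ occursName Bstar c ∧ ¬ occursName Bstar d := by
        constructor <;> intro h <;> exact hc (by first | exact Or.inl h | exact Or.inr h)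
      simp only [Interp.sem, ihc this.1, ihd this.2]
  | ex r c ih =>
      simp only [Interp.sem, ih hc, hR]

lemma exists_fresh [Infinite Ind] {A : ABox C R Ind} (hfin : A.Finite) :
    ∃ d, ¬ mentionsA d A := by
  have h : {d | mentionsA d A}.Finite := by
    have hsub : {d | mentionsA d A} ⊆ ⋃ ax ∈ A, {d | ax.mentions d} := by
      rintro d ⟨ax, hax, hm⟩
      exact Set.mem_biUnion hax hm
    refine Set.Finite.subset (Set.Finite.biUnion hfin ?_) hsub
    intro ax _
    cases ax with
    | concept c a =>
        refine Set.Finite.subset (Set.finite_singleton a) ?_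
        intro d hd; simp only [Assertion.mentions, Set.mem_setOf_eq] at hd; exact hd.symm
    | role r a b =>
        refine Set.Finite.subset ((Set.finite_singleton b).insert a) ?_
        intro d hd; simp only [Assertion.mentions] at hd
        rcases hd with h | h <;> simp [h]
  obtain ⟨d, hd⟩ := h.infinite_compl.nonempty
  exact ⟨d, hd⟩

lemma entails_mem {T : TBox C R} {A : ABox C R Ind} {ax : Assertion C R Ind}
    (h : ax ∈ A) : entailsO A T ax := fun _ _ hm => hm.1 ax h

/-- Every assertion along a derivation is mentioned at the end (steps only insert). -/
lemma step_subset {T : TBox C R} {good : ABox C R Ind → Prop} {A A' : ABox C R Ind}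
    (h : Step T good A A') : A ⊆ A' := by
  rcases h with h | h
  · cases h <;> intro ax hax <;> simp [hax]
  · cases h <;> intro ax hax <;> simp [hax]

/-- Preservation of the key invariant by a single step. -/
lemma inv_step {T : TBox C R} {Bstar : C} {astar : Ind} {Cc : ELConcept C R}
    {A A' : ABox C R Ind}
    (hstep : Step T (ceGuard T Bstar astar) A A')
    (hC : Assertion.concept Cc astar ∈ A)
    (hne : ¬ entailsO A T (Assertion.concept (ELConcept.atom Bstar) astar)) :
    ¬ entailsO A' T (Assertion.concept (ELConcept.atom Bstar) astar) := by
  classical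
  simp only [entailsO, not_forall] at hne ⊢
  obtain ⟨δ, I, hm, hnot⟩ := hne
  rcases hstep with h | h
  · -- core rules: the added assertion is satisfied in every model of A ∪ T
    cases h with
    | @conjRule D c a hD hAt hnotin =>
        refine ⟨δ, I, ⟨?_, hm.2⟩, hnot⟩
        intro ax hax
        rcases hax with rfl | hax
        · exact sem_mem_At I hAt (hm.1 _ hD)
        · exact hm.1 ax hax
    | @ex1 r a b B hr hB _ _ =>
        refine ⟨δ, I, ⟨?_, hm.2⟩, hnot⟩
        intro ax hax
        rcases hax with rfl | hax
        · exact ⟨I.indI b, hm.1 _ hr, hm.1 _ hB⟩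
        · exact hm.1 ax hax
    | @sub g a hg hw _ =>
        refine ⟨δ, I, ⟨?_, hm.2⟩, hnot⟩
        intro ax hax
        rcases hax with rfl | hax
        · refine hm.2 g hg ?_
          rcases hw with h1 | ⟨c, d, heq, hc, hd2⟩
          · exact hm.1 _ h1
          · rw [heq]; exact ⟨hm.1 _ hc, hm.1 _ hd2⟩
        · exact hm.1 ax hax
  · cases h with
    | @reuse r a c E hE hnosucc hgood =>
        obtain ⟨_, hng⟩ := hgood
        simpa only [entailsO, not_forall] using hng
    | @fresh r a d E hE hnosucc hnogood hd =>
        obtain ⟨e, hre, heE⟩ := hm.1 _ hE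
        have had : a ≠ d := fun h => hd ⟨_, hE, h⟩
        have hsd : astar ≠ d := fun h => hd ⟨_, hC, h⟩
        let J : Interp C R Ind δ := ⟨I.atomI, I.roleI, Function.update I.indI d e⟩
        have hsem : ∀ c, J.sem c = I.sem c := sem_mk I _
        have hJa : ∀ b : Ind, b ≠ d → Function.update I.indI d e b = I.indI b :=
          fun b hb => Function.update_of_ne hb _ _
        have hJd : Function.update I.indI d e d = e := Function.update_self _ _ _
        have hsatA : ∀ ax ∈ A, J.satA ax := by
          intro ax hax
          have hmen : ¬ ax.mentions d := fun h => hd ⟨ax, hax, h⟩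
          have hthis := hm.1 ax hax
          cases ax with
          | concept c b =>
              have hb : b ≠ d := hmen
              show Function.update I.indI d e b ∈ J.sem c
              rw [hJa b hb, hsem]; exact hthis
          | role r' b b' =>
              have hb : b ≠ d := fun h => hmen (Or.inl h)
              have hb' : b' ≠ d := fun h => hmen (Or.inr h)
              show (Function.update I.indI d e b, Function.update I.indI d e b') ∈ I.roleI r'
              rw [hJa b hb, hJa b' hb']; exact hthis
        refine ⟨δ, J, ⟨?_, ?_⟩, ?_⟩
        · intro ax hax
          rcases hax with rfl | hax
          · show (Function.update I.indI d e a, Function.update I.indI d e d) ∈ I.roleI r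
            rw [hJa a had, hJd]; exact hre
          · rcases hax with rfl | hax
            · show Function.update I.indI d e d ∈ J.sem E
              rw [hJd, hsem]; exact heE
            · rcases hax with rfl | hax
              · exact Set.mem_univ _
              · exact hsatA ax hax
        · intro g hg
          intro x hx
          rw [hsem] at hx ⊢
          exact hm.2 g hg hx
        · show Function.update I.indI d e astar ∉ J.sem (ELConcept.atom Bstar)
          rw [hJa astar hsd, hsem]
          exact hnot

/-- The invariant holds along the whole derivation. -/
lemma inv_reach {T : TBox C R} {Bstar : C} {astar : Ind} {Cc : ELConcept C R}
    {A A' : ABox C R Ind}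
    (hreach : Relation.ReflTransGen (Step T (ceGuard T Bstar astar)) A A')
    (hC : Assertion.concept Cc astar ∈ A)
    (hne : ¬ entailsO A T (Assertion.concept (ELConcept.atom Bstar) astar)) :
    Assertion.concept Cc astar ∈ A' ∧
      ¬ entailsO A' T (Assertion.concept (ELConcept.atom Bstar) astar) := by
  induction hreach with
  | refl => exact ⟨hC, hne⟩
  | tail h1 h2 ih =>
      exact ⟨step_subset h2 ih.1, inv_step h2 ih.1 ih.2⟩

/-- The induced interpretation of a complete, clash-free ABox satisfies
all concept assertions of the ABox. -/
lemma induced_sound [Infinite Ind] {T : TBox C R} {good : ABox C R Ind → Prop}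
    {A' : ABox C R Ind} (hfin : A'.Finite)
    (hcomp : completeA T good A') (hcf : clashFree A') :
    ∀ (n : ℕ) (E : ELConcept C R) (a : Ind), csize E ≤ n →
      Assertion.concept E a ∈ A' → a ∈ (induced A').sem E := by
  intro n
  induction n with
  | zero => intro E a h; exact absurd (le_trans (csize_pos E) h) (by omega)
  | succ n ih =>
    intro E a hsz hmem
    cases E with
    | top => exact Set.mem_univ _
    | bot => exact absurd hmem (hcf a)
    | atom B => exact hmem
    | conj c d =>
        have hAt : ∀ e ∈ At (ELConcept.conj c d), Assertion.concept e a ∈ A' := by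
          intro e he
          by_contra hno
          exact hcomp ⟨_, Or.inl (StepCore.conjRule hmem he hno)⟩
        refine sem_of_At (induced A') ?_
        intro e he
        refine ih e a ?_ (hAt e he)
        have h1 : csize e ≤ csize c + csize d := by
          rcases he with h | h
          · exact le_trans (mem_At_csize h) (by omega)
          · exact le_trans (mem_At_csize h) (by omega)
        have hsz' : csize c + csize d + 1 ≤ n + 1 := hsz
        omega
    | ex r c =>
        have hb : ∃ b, Assertion.role r a b ∈ A' ∧ Assertion.concept c b ∈ A' := by
          by_contra hno
          by_cases hg : ∃ c', good (insert (Assertion.role r a c')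
              (insert (Assertion.concept c c') A'))
          · obtain ⟨c', hc'⟩ := hg
            exact hcomp ⟨_, Or.inr (StepEx.reuse hmem hno hc')⟩
          · obtain ⟨d, hd⟩ := exists_fresh hfin
            exact hcomp ⟨_, Or.inr (StepEx.fresh hmem hno hg hd)⟩
        obtain ⟨b, hrb, hcb⟩ := hb
        refine ⟨b, hrb, ?_⟩
        refine ih c b ?_ hcb
        have hsz' : csize c + 1 ≤ n + 1 := hsz
        omega

end MyAux

/-- Completeness of the counterexample algorithm: if in the
generated interpretation `a*^I ∈ (B*)^I`, then `T ⊨ C ⊑ D`; contrapositively,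
if `T ⊭ C ⊑ D` then the output is a genuine counterexample with
`a*^I ∈ C^I` and `a*^I ∉ (B*)^I`. -/
theorem stmt14 {C R Ind : Type} [Infinite Ind] (T : TBox C R)
    (Cc D : ELConcept C R) (Bstar : C) (astar : Ind) (A' : ABox C R Ind)
    (hnorm : ∀ g ∈ T, normalizedAxiom g ∨ g = (D, ELConcept.atom Bstar))
    (hmem : (D, ELConcept.atom Bstar) ∈ T)
    (hfreshC : ¬ occursName Bstar Cc) (hfreshD : ¬ occursName Bstar D)
    (hfreshT : ∀ g ∈ T, g = (D, ELConcept.atom Bstar) ∨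
      (¬ occursName Bstar g.1 ∧ ¬ occursName Bstar g.2))
    (hfin : A'.Finite)
    (hreach : Relation.ReflTransGen (Step T (ceGuard T Bstar astar))
      {Assertion.concept Cc astar} A')
    (hcomp : completeA T (ceGuard T Bstar astar) A') :
    ((induced A').indI astar ∈ (induced A').sem (ELConcept.atom Bstar) →
      entailsT T (Cc, D)) ∧
    (¬ entailsT T (Cc, D) →
      (induced A').indI astar ∈ (induced A').sem Cc ∧
      (induced A').indI astar ∉ (induced A').sem (ELConcept.atom Bstar)) := by
  classical
  have key : ¬ entailsT T (Cc, D) →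
      Assertion.concept Cc astar ∈ A' ∧
      ¬ entailsO A' T (Assertion.concept (ELConcept.atom Bstar) astar) := by
    intro hnent
    have hinit : ¬ entailsO {Assertion.concept Cc astar} T
        (Assertion.concept (ELConcept.atom Bstar) astar) := by
      simp only [entailsT] at hnent
      push_neg at hnent
      obtain ⟨Ind', δ, I, hIT, hns⟩ := hnent
      rw [Interp.satGCI, Set.not_subset] at hns
      obtain ⟨x, hxC, hxD⟩ := hns
      intro hent
      let J : Interp C R Ind δ :=
        ⟨fun B => if B = Bstar then I.sem D else I.atomI B, I.roleI, fun _ => x⟩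
      have hAg : ∀ B, B ≠ Bstar → J.atomI B = I.atomI B := by
        intro B hB
        show (if B = Bstar then I.sem D else I.atomI B) = I.atomI B
        rw [if_neg hB]
      have hsemJ : ∀ c, ¬ occursName Bstar c → J.sem c = I.sem c :=
        sem_fresh I J Bstar hAg rfl
      have hmod : J.modelO {Assertion.concept Cc astar} T := by
        constructor
        · intro ax hax
          rw [Set.mem_singleton_iff] at hax; subst hax
          show J.indI astar ∈ J.sem Cc
          rw [hsemJ Cc hfreshC]; exact hxC
        · intro g hg
          rcases hfreshT g hg with hgeq | ⟨h1, h2⟩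
          · subst hgeq
            intro y hy
            have hy' : y ∈ J.sem D := hy
            rw [hsemJ D hfreshD] at hy'
            show y ∈ (if Bstar = Bstar then I.sem D else I.atomI Bstar)
            rw [if_pos rfl]; exact hy'
          · intro y hy
            rw [hsemJ _ h1] at hy
            rw [hsemJ _ h2]
            exact hIT g hg hy
      have hsat := hent δ J hmod
      have hx' : x ∈ (if Bstar = Bstar then I.sem D else I.atomI Bstar) := hsat
      rw [if_pos rfl] at hx'
      exact hxD hx'
    exact inv_reach hreach rfl hinit
  constructor
  · intro hB
    by_contra hnent
    exact (key hnent).2 (entails_mem hB)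
  · intro hnent
    obtain ⟨hCmem, hne⟩ := key hnent
    have hne' := hne
    simp only [entailsO, not_forall] at hne'
    obtain ⟨δ, I, hm, _⟩ := hne'
    have hcf : clashFree A' := by
      intro a ha
      exact hm.1 _ ha
    refine ⟨?_, ?_⟩
    · exact induced_sound hfin hcomp hcf (csize Cc) Cc astar le_rfl hCmem
    · intro hB
      exact hne (entails_mem hB)
end

section
/- Canonical model characterization of non-entailment in EL: for any EL TBox T and GCI η = C ⊑ D, T ⊭ η if and only if the canonical model I_T (extended with an element for C) does not satisfy η. -/
/-- The canonical model of a TBox `T`: one domain element `d_E` per concept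
`E`, with `d_E ∈ A^I` iff `T ⊨ E ⊑ A` and `(d_E, d_F) ∈ r^I` iff
`T ⊨ E ⊑ ∃r.F`. -/
def canInterp {C R : Type} (T : TBox C R) :
    Interp C R (ELConcept C R) (ELConcept C R) where
  atomI := fun A => {E | entailsT T (E, ELConcept.atom A)}
  roleI := fun r => {p | entailsT T (p.1, ELConcept.ex r p.2)}
  indI := id

/-- Canonical model characterization of non-entailment in EL:
`I_T` is a model of `T`, `d_C ∈ C^{I_T}`, and `T ⊭ C ⊑ D` iff the canonical
model does not satisfy `C ⊑ D` at `d_C`. -/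
theorem stmt16 {C R : Type} (T : TBox C R) (Cc D : ELConcept C R)
    (hbfT : ∀ g ∈ T, botFree g.1 ∧ botFree g.2)
    (hbfC : botFree Cc) (hbfD : botFree D) :
    (canInterp T).modelT T ∧
    Cc ∈ (canInterp T).sem Cc ∧
    (¬ entailsT T (Cc, D) ↔ Cc ∉ (canInterp T).sem D) := by
  have key : ∀ D : ELConcept C R, botFree D → ∀ E : ELConcept C R,
      E ∈ (canInterp T).sem D ↔ entailsT T (E, D) := by
    intro D
    induction D with
    | top =>
      intro _ E
      simp only [Interp.sem, Set.mem_univ, true_iff]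
      intro Ind δ I _ x _; simp [Interp.sem]
    | bot => intro h; exact absurd h (by simp [botFree])
    | atom A => intro _ E; exact Iff.rfl
    | conj c d ihc ihd =>
      intro hbf E
      obtain ⟨hc, hd⟩ := hbf
      simp only [Interp.sem, Set.mem_inter_iff, ihc hc, ihd hd]
      constructor
      · rintro ⟨h1, h2⟩ Ind δ I hM x hx
        exact ⟨h1 Ind δ I hM hx, h2 Ind δ I hM hx⟩
      · intro h
        constructor
        · intro Ind δ I hM x hx; exact (h Ind δ I hM hx).1
        · intro Ind δ I hM x hx; exact (h Ind δ I hM hx).2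
    | ex r c ihc =>
      intro hbf E
      constructor
      · rintro ⟨F, hrF, hFc⟩
        intro Ind δ I hM x hx
        obtain ⟨y, hy, hyF⟩ := hrF Ind δ I hM hx
        exact ⟨y, hy, (ihc hbf F).mp hFc Ind δ I hM hyF⟩
      · intro h
        refine ⟨c, h, (ihc hbf c).mpr ?_⟩
        intro Ind δ I hM x hx; exact hx
  refine ⟨?_, ?_, ?_⟩
  · intro g hg E hE
    have h1 := (key g.1 (hbfT g hg).1 E).mp hE
    refine (key g.2 (hbfT g hg).2 E).mpr ?_
    intro Ind δ I hM x hx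
    exact hM g hg (h1 Ind δ I hM hx)
  · exact (key Cc hbfC Cc).mpr (fun Ind δ I hM x hx => hx)
  · rw [key D hbfD Cc]
end
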